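/- Let S ⊆ (0,∞) be a finite nonempty set of positive reals. Then every nonempty finite subset X of Q_S has a big Ramsey degree in U_S: there is a least positive integer l such that for every positive integer k and every coloring χ of the set of isometric copies of X in Q_S with k colors, there is an isometric copy Q̃ of Q_S inside Q_S such that χ takes at most l values on the isometric copies of X contained in Q̃. -/

import Mathlib

/-- The ultrametric Urysohn space with distances in `S`, realized as the
set of finitely supported functions from `S` to `ℕ`. -/
def QS (S : Set ℝ) : Type := {x : S → ℕ // (Function.support x).Finite}

/-- The ultrametric on `QS S`: the largest `s ∈ S` at which `x` and `y`
differ, and `0` if `x = y` (the supremum of the empty set of reals is `0`). -/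
noncomputable def qdist (S : Set ℝ) (x y : QS S) : ℝ :=
  sSup (Subtype.val '' {s : S | x.1 s ≠ y.1 s})

/-- `Y ⊆ QS S'` is an isometric copy of `X ⊆ QS S`. -/
def IsCopyIn (S S' : Set ℝ) (X : Set (QS S)) (Y : Set (QS S')) : Prop :=
  ∃ e : X → QS S', Function.Injective e ∧ Set.range e = Y ∧
    ∀ a b : X, qdist S' (e a) (e b) = qdist S a.1 b.1

/-- `X` is an isometric copy of `QS S` inside `QS S`. -/
def IsCopyOfQS (S : Set ℝ) (X : Set (QS S)) : Prop :=
  ∃ e : QS S → QS S, Function.Injective e ∧ Set.range e = X ∧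
    ∀ x y, qdist S (e x) (e y) = qdist S x y

/-- The reverse order `>` well-orders `S`: every nonempty subset of `S`
has a greatest element. -/
def RevWellOrdered (S : Set ℝ) : Prop :=
  ∀ T ⊆ S, T.Nonempty → ∃ m ∈ T, ∀ t ∈ T, t ≤ m

/-- `b` is a metric ball of `QS S` with radius `r ∈ S ∪ {0}`. -/
def IsBall (S : Set ℝ) (b : Set (QS S)) (r : ℝ) : Prop :=
  (r ∈ S ∨ r = 0) ∧ ∃ x : QS S, b = {y | qdist S x y ≤ r}

/-- `r⁻`: the greatest element of `S` below `r` (and `0` if there is none). -/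
noncomputable def rminus (S : Set ℝ) (r : ℝ) : ℝ := sSup {t | t ∈ S ∧ t < r}

/-- `A` is small in the ball `b` of radius `r`. -/
def SmallIn (S : Set ℝ) (A b : Set (QS S)) (r : ℝ) : Prop :=
  (r = 0 ∧ A ∩ b = ∅) ∨
  (0 < r ∧ ∃ F : Finset (QS S), A ∩ b ⊆ ⋃ c ∈ F, {y | qdist S c y ≤ rminus S r})

/-- `χ` admits at most `l` values on copies of `X` inside a copy of `QS S'`,
for every coloring with `k` colors. -/
def BRDbound (S S' : Set ℝ) (X : Set (QS S)) (l : ℕ) : Prop :=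
  ∀ k : ℕ, 0 < k → ∀ χ : Set (QS S') → Fin k,
    ∃ Q : Set (QS S'), IsCopyOfQS S' Q ∧
      (χ '' {Y | IsCopyIn S S' X Y ∧ Y ⊆ Q}).ncard ≤ l

/-- `X ⊆ QS S` has big Ramsey degree `l` in `U_{S'}`. -/
def HasBigRamseyDegree (S S' : Set ℝ) (X : Set (QS S)) (l : ℕ) : Prop :=
  IsLeast {m : ℕ | 0 < m ∧ BRDbound S S' X m} l


/-- Infinite Ramsey theorem, relative form. -/
theorem ramsey_rel {C : Type} [Finite C] :
    ∀ (r : ℕ) (χ : Finset ℕ → C) (M : Set ℕ), M.Infinite →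
      ∃ N : Set ℕ, N ⊆ M ∧ N.Infinite ∧ ∃ c : C, ∀ G : Finset ℕ,
        ↑G ⊆ N → G.card = r → χ G = c := by
  intro r
  induction r with
  | zero =>
      intro χ M hM
      exact ⟨M, subset_rfl, hM, χ ∅, fun G _ hc => by
        rw [Finset.card_eq_zero.mp hc]⟩
  | succ r ih =>
      intro χ M hM
      have key : ∀ (M' : Set ℕ), M'.Infinite →
          ∃ N : Set ℕ, N.Infinite ∧ N ⊆ M' \ Set.Iic (sInf M') ∧
            ∃ c : C, ∀ G : Finset ℕ, ↑G ⊆ N → G.card = r →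
              χ (insert (sInf M') G) = c := by
        intro M' hM'
        obtain ⟨N, hNsub, hNinf, c, hc⟩ :=
          ih (fun G => χ (insert (sInf M') G)) (M' \ Set.Iic (sInf M'))
            (hM'.diff (Set.finite_Iic _))
        exact ⟨N, hNinf, hNsub, c, hc⟩
      let next : {p : Set ℕ // p.Infinite} → {p : Set ℕ // p.Infinite} :=
        fun p => ⟨(key p.1 p.2).choose, (key p.1 p.2).choose_spec.1⟩
      let seq : ℕ → {p : Set ℕ // p.Infinite} := fun i => next^[i] ⟨M, hM⟩
      let a : ℕ → ℕ := fun i => sInf (seq i).1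
      have hseq_succ : ∀ i, seq (i + 1) = next (seq i) := fun i =>
        Function.iterate_succ_apply' next i _
      have hsub : ∀ i, (seq (i + 1)).1 ⊆ (seq i).1 \ Set.Iic (a i) := by
        intro i
        rw [hseq_succ i]
        exact (key (seq i).1 (seq i).2).choose_spec.2.1
      have hcol : ∀ i, ∃ c : C, ∀ G : Finset ℕ, ↑G ⊆ (seq (i + 1)).1 →
          G.card = r → χ (insert (a i) G) = c := by
        intro i
        rw [hseq_succ i]
        exact (key (seq i).1 (seq i).2).choose_spec.2.2
      choose col hcolspec using hcol
      have hstep : ∀ i, (seq (i + 1)).1 ⊆ (seq i).1 := fun i =>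
        (hsub i).trans Set.diff_subset
      have hchain : ∀ i j, i ≤ j → (seq j).1 ⊆ (seq i).1 :=
        fun i j h => antitone_nat_of_succ_le (f := fun i => (seq i).1) hstep h
      have hamem : ∀ i, a i ∈ (seq i).1 := fun i => Nat.sInf_mem (seq i).2.nonempty
      have hamono : StrictMono a := by
        apply strictMono_nat_of_lt_succ
        intro i
        have h1 : a (i + 1) ∈ (seq i).1 \ Set.Iic (a i) := hsub i (hamem (i + 1))
        simpa using h1.2
      have hpig : ∃ v : C, {i : ℕ | col i = v}.Infinite := by
        by_contra h
        push_neg at h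
        have hfin : ∀ v : C, {i : ℕ | col i = v}.Finite :=
          fun v => h v
        have hcover : (Set.univ : Set ℕ) ⊆ ⋃ v : C, {i : ℕ | col i = v} :=
          fun i _ => Set.mem_iUnion.mpr ⟨col i, rfl⟩
        exact Set.infinite_univ ((Set.finite_iUnion hfin).subset hcover)
      obtain ⟨v, hI⟩ := hpig
      refine ⟨a '' {i : ℕ | col i = v}, ?_, hI.image hamono.injective.injOn, v, ?_⟩
      · rintro x ⟨i, -, rfl⟩
        exact hchain 0 i (Nat.zero_le i) (hamem i)
      · intro G hG hcard
        have hGne : G.Nonempty := Finset.card_pos.mp (by omega)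
        obtain ⟨i, hiI, hia⟩ := hG (G.min'_mem hGne)
        have herase_sub : ↑(G.erase (G.min' hGne)) ⊆ (seq (i + 1)).1 := by
          intro x hx
          have hxG : x ∈ G := Finset.mem_of_mem_erase hx
          obtain ⟨j, hjI, hja⟩ := hG hxG
          have hμx : G.min' hGne < x :=
            lt_of_le_of_ne (G.min'_le x hxG) (Ne.symm (Finset.ne_of_mem_erase hx))
          have hij : i < j := hamono.lt_iff_lt.mp (by rw [hia, hja]; exact hμx)
          exact hchain (i + 1) j hij (hja ▸ hamem j)
        have hcard' : (G.erase (G.min' hGne)).card = r := by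
          rw [Finset.card_erase_of_mem (G.min'_mem hGne), hcard]; omega
        have hχ := hcolspec i (G.erase (G.min' hGne)) herase_sub hcard'
        rw [hia, Finset.insert_erase (G.min'_mem hGne)] at hχ
        rw [hχ]
        exact hiI

/-- Extend a finset inside an infinite set to one of any given cardinality. -/
theorem extend_card {N : Set ℕ} (hN : N.Infinite) :
    ∀ (d : ℕ) (G₀ : Finset ℕ), ↑G₀ ⊆ N →
      ∃ G : Finset ℕ, G₀ ⊆ G ∧ ↑G ⊆ N ∧ G.card = G₀.card + d := by
  intro d
  induction d with
  | zero => intro G₀ h; exact ⟨G₀, subset_rfl, h, rfl⟩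
  | succ d ih =>
      intro G₀ h
      obtain ⟨G, hG₀G, hGN, hGcard⟩ := ih G₀ h
      obtain ⟨x, hxN, hxG⟩ := (hN.diff G.finite_toSet).nonempty
      refine ⟨insert x G, hG₀G.trans (Finset.subset_insert x G), ?_, ?_⟩
      · intro y hy
        rcases Finset.mem_insert.mp hy with rfl | hy
        · exact hxN
        · exact hGN hy
      · rw [Finset.card_insert_of_notMem (fun hc => hxG (Finset.mem_coe.mpr hc)), hGcard]; omega

/-- If `S ⊆ (0,∞)` is finite nonempty, every nonempty finite
subset `X` of `Q_S` has a big Ramsey degree in `U_S`. -/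
theorem stmt4 (S : Set ℝ) (hpos : S ⊆ Set.Ioi 0) (hfin : S.Finite)
    (hne : S.Nonempty) (X : Set (QS S)) (hX : X.Finite) (hXne : X.Nonempty) :
    ∃ l : ℕ, HasBigRamseyDegree S S X l := by
  classical
  haveI hSfin : Finite ↥S := hfin.to_subtype
  haveI : Fintype ↥S := Fintype.ofFinite ↥S
  haveI : Nonempty ↥S := hne.to_subtype
  set n := Fintype.card ↥S with hn
  set m := X.ncard with hm
  have hm1 : 0 < m := (Set.ncard_pos hX).mpr hXne
  have hn1 : 0 < n := Fintype.card_pos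
  set r := m * n with hrdef
  have hr1 : 0 < r := Nat.mul_pos hm1 hn1
  set l := Nat.card (Finset (↥S → Fin r)) with hl
  have hl1 : 0 < l := Nat.card_pos
  set P := {b : ℕ | 0 < b ∧ BRDbound S S X b} with hP
  have hbrd : BRDbound S S X l := by
    intro k hk χ
    -- decoding of a pattern τ and a value set G into a subset of QS S
    set decode : Finset (↥S → Fin r) → (G : Finset ℕ) → G.card = r → Set (QS S) :=
      fun τ G h => (fun ρ : ↥S → Fin r =>
        (⟨fun s => ((G.orderIsoOfFin h) (ρ s) : ℕ), Set.toFinite _⟩ : QS S)) '' ↑τ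
      with hdecode
    set χhat : Finset ℕ → (Finset (↥S → Fin r) → Fin k) :=
      fun G => if h : G.card = r then fun τ => χ (decode τ G h) else fun _ => ⟨0, hk⟩
      with hχhat
    obtain ⟨N, hNM, hNinf, cc, hcc⟩ := ramsey_rel r χhat Set.univ Set.infinite_univ
    set g : ℕ → ℕ := fun i => ((Set.Infinite.natEmbedding N hNinf i : ↥N) : ℕ) with hg
    have hginj : Function.Injective g := by
      intro i j h
      exact (Set.Infinite.natEmbedding N hNinf).injective (Subtype.ext h)
    have hgrange : Set.range g ⊆ N := by
      rintro x ⟨i, rfl⟩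
      exact (Set.Infinite.natEmbedding N hNinf i).2
    set e : QS S → QS S := fun x => ⟨fun s => g (x.1 s), Set.toFinite _⟩ with he
    have heinj : Function.Injective e := by
      intro x y h
      apply Subtype.ext
      funext s
      exact hginj (congrFun (congrArg Subtype.val h) s)
    have hecopy : IsCopyOfQS S (Set.range e) := by
      refine ⟨e, heinj, rfl, ?_⟩
      intro x y
      have hset : {s : ↥S | (e x).1 s ≠ (e y).1 s} = {s : ↥S | x.1 s ≠ y.1 s} := by
        ext s
        simp only [Set.mem_setOf_eq, he]
        exact not_congr hginj.eq_iff
      unfold qdist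
      rw [hset]
    refine ⟨Set.range e, hecopy, ?_⟩
    have himg : χ '' {Y | IsCopyIn S S X Y ∧ Y ⊆ Set.range e} ⊆ Set.range cc := by
      rintro v ⟨Y, ⟨⟨f, hfinj, hfrange, -⟩, hYQ⟩, rfl⟩
      haveI : Finite ↥X := hX.to_subtype
      subst hfrange
      have hYfin : (Set.range f).Finite := Set.finite_range f
      have hYcard : (Set.range f).ncard = m := by
        rw [← Set.image_univ, Set.ncard_image_of_injective _ hfinj, Set.ncard_univ,
          Nat.card_coe_set_eq]
      set YF := hYfin.toFinset with hYF
      have hYFcard : YF.card = m := by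
        rw [hYF, ← Set.ncard_eq_toFinset_card _ hYfin, hYcard]
      have hmemN : ∀ y ∈ Set.range f, ∀ s : ↥S, y.1 s ∈ N := by
        intro y hy s
        obtain ⟨x, rfl⟩ := hYQ hy
        exact hgrange ⟨x.1 s, rfl⟩
      set G₀ : Finset ℕ := YF.biUnion
        (fun y => Finset.image (fun s => y.1 s) Finset.univ) with hG₀
      have hG₀N : ↑G₀ ⊆ N := by
        intro x hx
        simp only [hG₀, Finset.coe_biUnion, Set.mem_iUnion, Finset.mem_coe,
          Finset.mem_image, Finset.mem_univ, true_and] at hx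
        obtain ⟨y, hy, s, rfl⟩ := hx
        exact hmemN y (hYfin.mem_toFinset.mp hy) s
      have hG₀card : G₀.card ≤ r := by
        have h1 : G₀.card ≤ YF.card * n :=
          Finset.card_biUnion_le_card_mul _ _ _
            (fun y _ => (Finset.card_image_le).trans (by rw [Finset.card_univ]))
        rw [hYFcard] at h1
        exact h1
      obtain ⟨G, hG₀G, hGN, hGcard'⟩ := extend_card hNinf (r - G₀.card) G₀ hG₀N
      have hGcard : G.card = r := by omega
      set ρfun : QS S → (↥S → Fin r) := fun y s =>
        if h : y.1 s ∈ G then (G.orderIsoOfFin hGcard).symm ⟨y.1 s, h⟩ else ⟨0, hr1⟩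
        with hρ
      set τ : Finset (↥S → Fin r) := YF.image ρfun with hτ
      have hkey : decode τ G hGcard = Set.range f := by
        rw [hdecode]
        simp only
        rw [hτ, Finset.coe_image]
        erw [← Set.image_comp]
        rw [hYF, Set.Finite.coe_toFinset]
        have : ∀ y ∈ Set.range f,
            ((fun ρ : ↥S → Fin r =>
              (⟨fun s => ((G.orderIsoOfFin hGcard) (ρ s) : ℕ), Set.toFinite _⟩ : QS S))
              ∘ ρfun) y = y := by
          intro y hy
          apply Subtype.ext
          funext s
          have hmemG : y.1 s ∈ G := by
            apply hG₀G
            simp only [hG₀, Finset.mem_biUnion]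
            exact ⟨y, hYfin.mem_toFinset.mpr hy,
              Finset.mem_image.mpr ⟨s, Finset.mem_univ s, rfl⟩⟩
          show ((G.orderIsoOfFin hGcard) (ρfun y s) : ℕ) = y.1 s
          rw [hρ]
          simp only [dif_pos hmemG]
          rw [OrderIso.apply_symm_apply]
        erw [Set.image_congr this, Set.image_id']
      refine ⟨τ, ?_⟩
      have h1 := congrFun (hcc G hGN hGcard) τ
      rw [hχhat] at h1
      simp only [dif_pos hGcard] at h1
      rw [← h1, hkey]
    calc (χ '' {Y | IsCopyIn S S X Y ∧ Y ⊆ Set.range e}).ncard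
        ≤ (Set.range cc).ncard := Set.ncard_le_ncard himg (Set.toFinite _)
      _ ≤ l := by
          rw [← Set.image_univ]
          calc (cc '' Set.univ).ncard ≤ (Set.univ : Set (Finset (↥S → Fin r))).ncard :=
              Set.ncard_image_le (Set.toFinite _)
            _ = l := by rw [Set.ncard_univ]
  have hmem : l ∈ P := ⟨hl1, hbrd⟩
  refine ⟨sInf P, ?_, ?_⟩
  · exact Nat.sInf_mem ⟨l, hmem⟩
  · exact fun b hb => Nat.sInf_le hb
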